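/- arXiv:2302.11440 — 3 statements merged into one kernel-verified Lean document; each statement's English description precedes it below -/
import Mathlib

section
/- Suppose A is a finite-dimensional graded-commutative real algebra, graded by degrees 0 through 3, satisfying Poincaré duality in dimension 3 (i.e. A^3 is one-dimensional and the multiplication pairing A^k × A^{3-k} → A^3 is nondegenerate for all k), and suppose there is an injective homomorphism of graded algebras A → ⋀*(ℝ^3). Then dim A^1 ≠ 2. -/
open ExteriorAlgebra Module


/-- If `A` is a finite-dimensional graded-commutative real algebra graded in
degrees 0..3 with Poincaré duality in dimension 3 (`A³` one-dimensional and the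
multiplication pairing `A^k × A^{3-k} → A³` nondegenerate), and there is an injective
homomorphism of graded algebras `A → ⋀*(ℝ³)`, then `dim A¹ ≠ 2`. -/
theorem stmt_2 {A : Type*} [Ring A] [Algebra ℝ A] [FiniteDimensional ℝ A]
    (𝒜 : ℕ → Submodule ℝ A) [GradedAlgebra 𝒜]
    (htop : ∀ k, 3 < k → 𝒜 k = ⊥)
    (hgc : ∀ (i j : ℕ) (a b : A), a ∈ 𝒜 i → b ∈ 𝒜 j →
      a * b = ((-1 : ℝ) ^ (i * j)) • (b * a))
    (hA3 : Module.finrank ℝ (𝒜 3) = 1)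
    (hPD : ∀ k, k ≤ 3 → ∀ a ∈ 𝒜 k, a ≠ 0 → ∃ b ∈ 𝒜 (3 - k), a * b ≠ 0)
    (Φ : A →ₐ[ℝ] ExteriorAlgebra ℝ (EuclideanSpace ℝ (Fin 3)))
    (hΦinj : Function.Injective Φ)
    (hΦgr : ∀ k, ∀ a ∈ 𝒜 k,
      Φ a ∈ (LinearMap.range (ExteriorAlgebra.ι ℝ : EuclideanSpace ℝ (Fin 3) →ₗ[ℝ]
        ExteriorAlgebra ℝ (EuclideanSpace ℝ (Fin 3))) ^ k :
        Submodule ℝ (ExteriorAlgebra ℝ (EuclideanSpace ℝ (Fin 3))))) :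
    Module.finrank ℝ (𝒜 1) ≠ 2 := by
  intro h
  set E := EuclideanSpace ℝ (Fin 3)
  -- basis of 𝒜 1
  let b : Basis (Fin 2) ℝ (𝒜 1) := Module.finBasisOfFinrankEq ℝ (𝒜 1) h
  set x : A := (b 0 : A) with hxdef
  set y : A := (b 1 : A) with hydef
  have hx : x ∈ 𝒜 1 := (b 0).2
  have hy : y ∈ 𝒜 1 := (b 1).2
  -- squares vanish
  have sq : ∀ a : A, a ∈ 𝒜 1 → a * a = 0 := by
    intro a ha
    have := hgc 1 1 a a ha ha
    simp only [mul_one, pow_one, neg_smul, one_smul] at this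
    have h2 : a * a + a * a = 0 := by linear_combination (norm := abel) this
    have h2' : (2 : ℝ) • (a * a) = 0 := by rw [two_smul]; exact h2
    simpa using (smul_eq_zero.mp h2').resolve_left (by norm_num)
  have hxx : x * x = 0 := sq x hx
  have hyy : y * y = 0 := sq y hy
  have hyx : y * x = -(x * y) := by
    have := hgc 1 1 y x hy hx
    simpa only [mul_one, pow_one, neg_smul, one_smul] using this
  -- x * y = 0
  have hxy2 : x * y ∈ 𝒜 2 := SetLike.mul_mem_graded hx hy
  have hxy0 : x * y = 0 := by
    by_contra hne
    obtain ⟨c, hc1, hc0⟩ := hPD 2 (by norm_num) (x * y) hxy2 hne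
    apply hc0
    have hrepr : (⟨c, hc1⟩ : 𝒜 1) =
        b.repr ⟨c, hc1⟩ 0 • b 0 + b.repr ⟨c, hc1⟩ 1 • b 1 := by
      conv_lhs => rw [← b.sum_repr ⟨c, hc1⟩]
      rw [Fin.sum_univ_two]
    have hc : c = b.repr ⟨c, hc1⟩ 0 • x + b.repr ⟨c, hc1⟩ 1 • y := by
      have := congrArg (Subtype.val) hrepr
      simpa using this
    rw [hc, mul_add, mul_smul_comm, mul_smul_comm]
    have h1 : x * y * x = 0 := by
      rw [mul_assoc, hyx, mul_neg, ← mul_assoc, hxx, zero_mul, neg_zero]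
    have h2 : x * y * y = 0 := by rw [mul_assoc, hyy, mul_zero]
    rw [h1, h2, smul_zero, smul_zero, add_zero]
  -- images in the exterior algebra
  obtain ⟨u, hu⟩ : ∃ u : E, ι ℝ u = Φ x := by
    have := hΦgr 1 x hx
    rw [pow_one] at this
    exact this
  obtain ⟨v, hv⟩ : ∃ v : E, ι ℝ v = Φ y := by
    have := hΦgr 1 y hy
    rw [pow_one] at this
    exact this
  have hmul : ι ℝ u * ι ℝ v = 0 := by
    rw [hu, hv, ← map_mul, hxy0, map_zero]
  -- u, v linearly independent
  have hbi : LinearIndependent ℝ (fun i : Fin 2 => ((b i : A))) :=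
    b.linearIndependent.map' (𝒜 1).subtype (Submodule.ker_subtype _)
  have hΦbi : LinearIndependent ℝ (fun i : Fin 2 => Φ ((b i : A))) :=
    hbi.map' Φ.toLinearMap (LinearMap.ker_eq_bot.mpr hΦinj)
  have huv : LinearIndependent ℝ ![u, v] := by
    have hcomp : (fun i : Fin 2 => (ι ℝ : E →ₗ[ℝ] _) (![u, v] i)) =
        (fun i : Fin 2 => Φ ((b i : A))) := by
      funext i
      fin_cases i <;> simp [hu, hv, hxdef, hydef]
    apply LinearIndependent.of_comp (ι ℝ : E →ₗ[ℝ] _)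
    show LinearIndependent ℝ (fun i : Fin 2 => (ι ℝ : E →ₗ[ℝ] _) (![u, v] i))
    rw [hcomp]
    exact hΦbi
  -- extend to w with ![w,u,v] linearly independent
  have hspan : Submodule.span ℝ (Set.range ![u, v]) ≠ ⊤ := by
    intro htop'
    have h1 : finrank ℝ (Submodule.span ℝ (Set.range ![u, v])) = 2 := by
      rw [finrank_span_eq_card huv]
      simp
    rw [htop', finrank_top] at h1
    have : finrank ℝ E = 3 := finrank_euclideanSpace_fin
    omega
  obtain ⟨w, hw⟩ : ∃ w : E, w ∉ Submodule.span ℝ (Set.range ![u, v]) := by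
    by_contra hall
    push_neg at hall
    exact hspan (Submodule.eq_top_iff'.mpr hall)
  have hwuv : LinearIndependent ℝ (Fin.cons w ![u, v] : Fin 3 → E) :=
    linearIndependent_fin_cons.mpr ⟨huv, hw⟩
  have hcard : Fintype.card (Fin 3) = finrank ℝ E := by
    show Fintype.card (Fin 3) = finrank ℝ (EuclideanSpace ℝ (Fin 3))
    rw [finrank_euclideanSpace_fin, Fintype.card_fin]
  let B : Basis (Fin 3) ℝ E := basisOfLinearIndependentOfCardEqFinrank hwuv hcard
  -- lift and evaluate
  let g : E [⋀^Fin 2]→ₗ[ℝ] ℝ := B.det.curryLeft w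
  let f : ∀ i, E [⋀^Fin i]→ₗ[ℝ] ℝ := fun i =>
    match i with
    | 2 => g
    | _ => 0
  have hlift : liftAlternating f (ι ℝ u * ι ℝ v) = (1 : ℝ) := by
    rw [liftAlternating_ι_mul, liftAlternating_ι]
    show g (Fin.cons u ![v]) = 1
    show B.det (Fin.cons w (Fin.cons u ![v])) = 1
    have : (Fin.cons w (Fin.cons u ![v]) : Fin 3 → E) = ⇑B := by
      rw [coe_basisOfLinearIndependentOfCardEqFinrank]
      funext i
      fin_cases i <;> rfl
    rw [this, Basis.det_self]
  rw [hmul, map_zero] at hlift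
  exact one_ne_zero hlift.symm
end

section
/- Let μ be an atomless Borel measure on ℝ^n with μ(ℝ^n) = ∞ and μ(B) < ∞ for every ball B. Then there exists a constant D = D(n) > 1 such that for every m ∈ ℕ there is a ball B ⊂ ℝ^n with m ≤ μ(2B) ≤ D·μ(B). -/
open MeasureTheory Metric
open scoped ENNReal

/-- Rickman's Hunting Lemma, Bonk–Poggi-Corradini formulation: for every
dimension `n` there is a constant `D = D(n) > 1` such that every atomless Borel measure
`μ` on `ℝ^n` with `μ(ℝ^n) = ∞` which is finite on balls admits, for every `m ∈ ℕ`,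
a ball `B` with `m ≤ μ(2B) ≤ D·μ(B)`. -/
theorem stmt_4 (n : ℕ) (hn : 1 ≤ n) :
    ∃ D : ℝ, 1 < D ∧
      ∀ μ : Measure (EuclideanSpace ℝ (Fin n)),
        NoAtoms μ →
        μ Set.univ = ⊤ →
        (∀ (x : EuclideanSpace ℝ (Fin n)) (r : ℝ), μ (ball x r) < ⊤) →
        ∀ m : ℕ, ∃ (x : EuclideanSpace ℝ (Fin n)) (r : ℝ), 0 < r ∧
          (m : ℝ≥0∞) ≤ μ (ball x (2 * r)) ∧
          μ (ball x (2 * r)) ≤ ENNReal.ofReal D * μ (ball x r) := by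
  classical
  obtain ⟨t, htf, htc⟩ :=
    Metric.totallyBounded_iff.mp
      (isCompact_closedBall (0 : EuclideanSpace ℝ (Fin n)) 2).totallyBounded (1/2) (by norm_num)
  set s : Finset (EuclideanSpace ℝ (Fin n)) :=
    htf.toFinset.filter (fun c => dist c 0 ≤ 5/2) with hs
  have hcov : closedBall (0 : EuclideanSpace ℝ (Fin n)) 2 ⊆ ⋃ c ∈ s, ball c (1/2) := by
    intro z hz
    obtain ⟨c, hc, hzc⟩ := Set.mem_iUnion₂.mp (htc hz)
    have h1 : dist z c < 1/2 := mem_ball.mp hzc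
    have h2 : dist z 0 ≤ 2 := mem_closedBall.mp hz
    have hc5 : dist c 0 ≤ 5/2 := by
      have := dist_triangle c z 0
      rw [dist_comm c z] at this
      linarith
    exact Set.mem_iUnion₂.mpr ⟨c, by simp [hs, htf.mem_toFinset, hc]; rwa [dist_zero_right] at hc5, hzc⟩
  have hsne : s.Nonempty := by
    obtain ⟨c, hc, _⟩ := Set.mem_iUnion₂.mp (hcov (mem_closedBall_self (by norm_num)))
    exact ⟨c, hc⟩
  set N := s.card with hNdef
  have hN1 : 1 ≤ N := Finset.card_pos.mpr hsne
  refine ⟨((2*N : ℕ) : ℝ), by exact_mod_cast (by omega : 1 < 2*N), ?_⟩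
  intro μ _ hμtop hball m
  by_contra hcon
  push_neg at hcon
  have hD : ENNReal.ofReal ((2*N : ℕ) : ℝ) = ((2*N : ℕ) : ℝ≥0∞) := ENNReal.ofReal_natCast _
  -- one covering step
  have hstep : ∀ (x : EuclideanSpace ℝ (Fin n)) (r : ℝ), 0 < r →
      ∃ y, dist y x ≤ 3*r ∧ μ (ball x (2*r)) ≤ (N : ℝ≥0∞) * μ (ball y (r/2)) := by
    intro x r hr
    have hsub : ball x (2*r) ⊆ ⋃ c ∈ s, ball (x + r • c) (r/2) := by
      intro z hz
      have hw : r⁻¹ • (z - x) ∈ closedBall (0 : EuclideanSpace ℝ (Fin n)) 2 := by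
        rw [mem_closedBall, dist_zero_right, norm_smul, norm_inv, Real.norm_of_nonneg hr.le]
        have hz' : ‖z - x‖ < 2*r := by rwa [mem_ball, dist_eq_norm] at hz
        rw [inv_mul_le_iff₀ hr]
        nlinarith [norm_nonneg (z - x)]
      obtain ⟨c, hc, hzc⟩ := Set.mem_iUnion₂.mp (hcov hw)
      refine Set.mem_iUnion₂.mpr ⟨c, hc, ?_⟩
      rw [mem_ball] at hzc ⊢
      have hzx : z - (x + r • c) = r • (r⁻¹ • (z - x) - c) := by
        rw [smul_sub, smul_smul, mul_inv_cancel₀ hr.ne', one_smul]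
        abel
      rw [dist_eq_norm, hzx, norm_smul, Real.norm_of_nonneg hr.le]
      rw [dist_eq_norm] at hzc
      nlinarith [norm_nonneg (r⁻¹ • (z - x) - c)]
    obtain ⟨c, hcs, hcmax⟩ :=
      s.exists_max_image (fun c => μ (ball (x + r • c) (r/2))) hsne
    refine ⟨x + r • c, ?_, ?_⟩
    · have hdist : dist (x + r • c) x = r * ‖c‖ := by
        rw [dist_eq_norm, add_sub_cancel_left, norm_smul, Real.norm_of_nonneg hr.le]
      have hc5 : ‖c‖ ≤ 5/2 := by
        have := (Finset.mem_filter.mp (hs ▸ hcs)).2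
        rwa [dist_zero_right] at this
      rw [hdist]; nlinarith
    · calc μ (ball x (2*r)) ≤ μ (⋃ c ∈ s, ball (x + r • c) (r/2)) := measure_mono hsub
        _ ≤ ∑ c ∈ s, μ (ball (x + r • c) (r/2)) := measure_biUnion_finset_le _ _
        _ ≤ s.card • μ (ball (x + r • c) (r/2)) := Finset.sum_le_card_nsmul _ _ _ hcmax
        _ = (N : ℝ≥0∞) * μ (ball (x + r • c) (r/2)) := by rw [nsmul_eq_mul]
  set M₀ : ℝ≥0∞ := (N : ℝ≥0∞) * ((m : ℝ≥0∞) + 1) with hM₀def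
  have hM₀top : M₀ ≠ ⊤ := by
    rw [hM₀def]
    exact ENNReal.mul_ne_top (ENNReal.natCast_ne_top N)
      (by simp [ENNReal.add_ne_top])
  have hM₀1 : 1 ≤ M₀ := by
    rw [hM₀def]
    calc (1:ℝ≥0∞) = 1 * 1 := by ring
      _ ≤ (N : ℝ≥0∞) * ((m : ℝ≥0∞) + 1) := by
          gcongr
          · exact_mod_cast hN1
          · exact le_add_self
  -- a big initial ball
  have hexists : ∃ k : ℕ, M₀ < μ (ball (0 : EuclideanSpace ℝ (Fin n)) k) := by
    have hmono : Monotone (fun k : ℕ => ball (0 : EuclideanSpace ℝ (Fin n)) k) :=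
      fun a b hab => ball_subset_ball (by exact_mod_cast hab)
    have hU := Directed.measure_iUnion (μ := μ) hmono.directed_le
    rw [Metric.iUnion_ball_nat, hμtop] at hU
    have : M₀ < ⨆ k : ℕ, μ (ball (0 : EuclideanSpace ℝ (Fin n)) k) := by
      rw [← hU]; exact hM₀top.lt_top
    exact lt_iSup_iff.mp this
  obtain ⟨K, hK⟩ := hexists
  have hK0 : (0:ℝ) < K := by
    by_contra h
    push_neg at h
    rw [ball_eq_empty.mpr h, measure_empty] at hK
    exact absurd hK (by simp)
  set x₀ : EuclideanSpace ℝ (Fin n) := 0 with hx₀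
  set r₀ : ℝ := K/2 with hr₀def
  have hr₀ : 0 < r₀ := by positivity
  have hbase : M₀ ≤ μ (ball x₀ (2*r₀)) := by
    have h2r : 2*r₀ = (K:ℝ) := by rw [hr₀def]; ring
    rw [h2r]; exact hK.le
  -- the iteration
  have key : ∀ k : ℕ, ∃ x r, 0 < r ∧ dist x x₀ ≤ 6*(r₀ - r) ∧
      2^k * M₀ ≤ μ (ball x (2*r)) := by
    intro k
    induction k with
    | zero => exact ⟨x₀, r₀, hr₀, by simp, by simpa using hbase⟩
    | succ k ih =>
      obtain ⟨x, r, hr, hdist, hmeas⟩ := ih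
      obtain ⟨y, hyd, hyμ⟩ := hstep x r hr
      have h2k : (1:ℝ≥0∞) ≤ 2^k := one_le_pow_of_one_le' (by norm_num : (1:ℝ≥0∞) ≤ 2) k
      have hμy : (N : ℝ≥0∞) * ((m : ℝ≥0∞) + 1) ≤ (N : ℝ≥0∞) * μ (ball y (r/2)) := by
        calc (N : ℝ≥0∞) * ((m : ℝ≥0∞) + 1) = M₀ := hM₀def.symm
          _ ≤ 2^k * M₀ := le_mul_of_one_le_left zero_le h2k
          _ ≤ μ (ball x (2*r)) := hmeas
          _ ≤ (N : ℝ≥0∞) * μ (ball y (r/2)) := hyμ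
      have hy1 : (m : ℝ≥0∞) + 1 ≤ μ (ball y (r/2)) :=
        (ENNReal.mul_le_mul_iff_right (Nat.cast_ne_zero.mpr (by omega) : (N:ℝ≥0∞) ≠ 0)
          (ENNReal.natCast_ne_top N)).mp hμy
      have hm : (m : ℝ≥0∞) ≤ μ (ball y (2*(r/2))) := by
        refine le_trans (le_trans le_self_add hy1) (measure_mono (ball_subset_ball ?_))
        linarith
      have hcon' := hcon y (r/2) (by positivity) hm
      refine ⟨y, r/2, by positivity, ?_, ?_⟩
      · calc dist y x₀ ≤ dist y x + dist x x₀ := dist_triangle _ _ _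
          _ ≤ 3*r + 6*(r₀ - r) := add_le_add hyd hdist
          _ ≤ 6*(r₀ - r/2) := by linarith
      · calc (2:ℝ≥0∞)^(k+1) * M₀ = 2 * (2^k * M₀) := by ring
          _ ≤ 2 * ((N : ℝ≥0∞) * μ (ball y (r/2))) := by
              exact mul_le_mul_right (hmeas.trans hyμ) 2
          _ = ((2*N : ℕ) : ℝ≥0∞) * μ (ball y (r/2)) := by push_cast; ring
          _ = ENNReal.ofReal ((2*N : ℕ) : ℝ) * μ (ball y (r/2)) := by rw [hD]
          _ ≤ μ (ball y (2*(r/2))) := hcon'.le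
  -- contradiction
  obtain ⟨J, hJ⟩ := ENNReal.exists_nat_gt (hball x₀ (9*r₀)).ne
  obtain ⟨x, r, hr, hdist, hmeas⟩ := key J
  have hrr : r ≤ r₀ := by
    have := dist_nonneg (x := x) (y := x₀)
    linarith
  have hsub : ball x (2*r) ⊆ ball x₀ (9*r₀) := by
    intro z hz
    rw [mem_ball] at hz ⊢
    have := dist_triangle z x x₀
    linarith
  have hfinal : (J : ℝ≥0∞) ≤ μ (ball x₀ (9*r₀)) := by
    calc (J : ℝ≥0∞) ≤ 2^J := by exact_mod_cast (Nat.lt_two_pow_self (n := J)).le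
      _ = 2^J * 1 := (mul_one _).symm
      _ ≤ 2^J * M₀ := mul_le_mul_right hM₀1 _
      _ ≤ μ (ball x (2*r)) := hmeas
      _ ≤ μ (ball x₀ (9*r₀)) := measure_mono hsub
  exact absurd hJ (not_lt.mpr hfinal)
end

section
/- Let f : B(0,2) → ℝ^n be a measurable map in W^{1,n}_loc whose weak differential satisfies ‖Df‖^n ≤ K·J_f almost everywhere, and suppose ∫_{B(0,2)} J_f ≤ D·∫_{B(0,1)} J_f with A := ∫_{B(0,1)} J_f > 0. Then for every bounded measurable k-covector-valued coefficient field α with ‖α‖_∞ < ∞ (thought of as a k-form along f), the normalized pullback f^!α := A^{-k/n} f^*α satisfies the L^{n/k} bound ‖f^!α‖_{L^{n/k}(B(0,2))} ≤ D·K·‖α‖_∞. -/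
open MeasureTheory Metric

/-- Lemma 3.1 of the paper, Euclidean-target setting: for a quasiregular-type
map `f` on `B(0,2)` with distortion constant `K` and doubling constant `D` for its Jacobian
density `J`, and `A = ∫_{B(0,1)} J > 0`, the normalized pullback `f^!α = A^{-k/n} f^*α` of a
bounded `k`-form `α` (whose pullback `g = |f^*α|` satisfies the pointwise bound
`g ≤ |α ∘ f|·‖Df‖^k`) satisfies `‖f^!α‖_{L^{n/k}(B(0,2))} ≤ D·K·‖α‖_∞`. -/
theorem stmt_5 (n m k : ℕ) (hn : 2 ≤ n) (hk1 : 1 ≤ k) (hkn : k ≤ n)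
    (K D M A : ℝ) (hK : 1 ≤ K) (hD : 1 < D)
    (f : EuclideanSpace ℝ (Fin n) → EuclideanSpace ℝ (Fin m))
    (Df : EuclideanSpace ℝ (Fin n) → (EuclideanSpace ℝ (Fin n) →L[ℝ] EuclideanSpace ℝ (Fin m)))
    (J : EuclideanSpace ℝ (Fin n) → ℝ)
    (hJ0 : ∀ x, 0 ≤ J x)
    (hJint : IntegrableOn J (ball (0 : EuclideanSpace ℝ (Fin n)) 2))
    (hdist : ∀ᵐ x ∂(volume.restrict (ball (0 : EuclideanSpace ℝ (Fin n)) 2)),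
      ‖Df x‖ ^ n ≤ K * J x)
    (hdoub : ∫ x in ball (0 : EuclideanSpace ℝ (Fin n)) 2, J x ≤
      D * ∫ x in ball (0 : EuclideanSpace ℝ (Fin n)) 1, J x)
    (hA : A = ∫ x in ball (0 : EuclideanSpace ℝ (Fin n)) 1, J x) (hApos : 0 < A)
    {V : Type*} [NormedAddCommGroup V]
    (α : EuclideanSpace ℝ (Fin m) → V)
    (hM : ∀ y, ‖α y‖ ≤ M)
    (g : EuclideanSpace ℝ (Fin n) → ℝ)   -- g = |f^*α|
    (hg0 : ∀ x, 0 ≤ g x) (hgmeas : Measurable g)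
    (hgle : ∀ᵐ x ∂(volume.restrict (ball (0 : EuclideanSpace ℝ (Fin n)) 2)),
      g x ≤ ‖α (f x)‖ * ‖Df x‖ ^ k) :
    (∫ x in ball (0 : EuclideanSpace ℝ (Fin n)) 2,
        (A ^ (-(k : ℝ) / (n : ℝ)) * g x) ^ ((n : ℝ) / (k : ℝ))) ^ ((k : ℝ) / (n : ℝ)) ≤
      D * K * M := by
  have hn0 : (0:ℝ) < n := by exact_mod_cast (by omega : 0 < n)
  have hk0 : (0:ℝ) < k := by exact_mod_cast (by omega : 0 < k)
  have hM0 : 0 ≤ M := le_trans (norm_nonneg _) (hM 0)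
  set r : ℝ := (n : ℝ) / k with hr
  set s : ℝ := (k : ℝ) / n with hs
  have hr0 : 0 ≤ r := by positivity
  have hrs : r * s = 1 := by
    rw [hr, hs]; field_simp
  have hs1 : s ≤ 1 := by
    rw [hs, div_le_one hn0]; exact_mod_cast hkn
  have hs0 : 0 < s := by positivity
  have hKD1 : 1 ≤ K * D := by nlinarith
  set c : ℝ := A ^ (-(k : ℝ) / (n : ℝ)) with hc
  have hc0 : 0 ≤ c := Real.rpow_nonneg hApos.le _
  -- pointwise bound
  have h1 : ∀ᵐ x ∂(volume.restrict (ball (0 : EuclideanSpace ℝ (Fin n)) 2)),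
      (c * g x) ^ r ≤ A⁻¹ * (M ^ r * (K * J x)) := by
    filter_upwards [hdist, hgle] with x hx1 hx2
    have hDf0 : (0:ℝ) ≤ ‖Df x‖ ^ k := by positivity
    have hg1 : g x ≤ M * ‖Df x‖ ^ k :=
      hx2.trans (mul_le_mul_of_nonneg_right (hM _) hDf0)
    have h2 : (g x) ^ r ≤ (M * ‖Df x‖ ^ k) ^ r :=
      Real.rpow_le_rpow (hg0 x) hg1 hr0
    have h3 : ((‖Df x‖ ^ k : ℝ)) ^ r = ‖Df x‖ ^ n := by
      rw [← Real.rpow_natCast ‖Df x‖ k, ← Real.rpow_mul (norm_nonneg _),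
        ← Real.rpow_natCast ‖Df x‖ n]
      congr 1
      rw [hr]; field_simp
    have h4 : (M * ‖Df x‖ ^ k) ^ r = M ^ r * ‖Df x‖ ^ n := by
      rw [Real.mul_rpow hM0 hDf0, h3]
    have h5 : c ^ r = A⁻¹ := by
      rw [hc, ← Real.rpow_mul hApos.le]
      have : -(k : ℝ) / (n : ℝ) * r = -1 := by
        rw [hr]; field_simp
      rw [this, Real.rpow_neg_one]
    calc (c * g x) ^ r = c ^ r * (g x) ^ r := Real.mul_rpow hc0 (hg0 x)
      _ = A⁻¹ * (g x) ^ r := by rw [h5]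
      _ ≤ A⁻¹ * (M ^ r * ‖Df x‖ ^ n) := by
          rw [← h4]; exact mul_le_mul_of_nonneg_left h2 (by positivity)
      _ ≤ A⁻¹ * (M ^ r * (K * J x)) := by
          have : M ^ r * ‖Df x‖ ^ n ≤ M ^ r * (K * J x) :=
            mul_le_mul_of_nonneg_left hx1 (Real.rpow_nonneg hM0 r)
          exact mul_le_mul_of_nonneg_left this (by positivity)
  have hint : Integrable (fun x => A⁻¹ * (M ^ r * (K * J x)))
      (volume.restrict (ball (0 : EuclideanSpace ℝ (Fin n)) 2)) := by
    have := (hJint.const_mul K).const_mul (M ^ r)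
    simpa [mul_assoc] using this.const_mul A⁻¹
  have hInt1 : ∫ x in ball (0 : EuclideanSpace ℝ (Fin n)) 2, (c * g x) ^ r ≤
      ∫ x in ball (0 : EuclideanSpace ℝ (Fin n)) 2, A⁻¹ * (M ^ r * (K * J x)) := by
    refine integral_mono_of_nonneg ?_ hint h1
    filter_upwards with x
    exact Real.rpow_nonneg (mul_nonneg hc0 (hg0 x)) r
  have hInt2 : ∫ x in ball (0 : EuclideanSpace ℝ (Fin n)) 2, A⁻¹ * (M ^ r * (K * J x)) =
      A⁻¹ * M ^ r * K * ∫ x in ball (0 : EuclideanSpace ℝ (Fin n)) 2, J x := by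
    have heq : (fun x : EuclideanSpace ℝ (Fin n) => A⁻¹ * (M ^ r * (K * J x))) =
        fun x => (A⁻¹ * M ^ r * K) * J x := by ext x; ring
    rw [heq, integral_const_mul]
  have hJball : ∫ x in ball (0 : EuclideanSpace ℝ (Fin n)) 2, J x ≤ D * A := by
    rw [hA]; exact hdoub
  have hI : ∫ x in ball (0 : EuclideanSpace ℝ (Fin n)) 2, (c * g x) ^ r ≤ M ^ r * (K * D) := by
    calc ∫ x in ball (0 : EuclideanSpace ℝ (Fin n)) 2, (c * g x) ^ r
        ≤ A⁻¹ * M ^ r * K * ∫ x in ball (0 : EuclideanSpace ℝ (Fin n)) 2, J x := by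
          rw [← hInt2]; exact hInt1
      _ ≤ A⁻¹ * M ^ r * K * (D * A) := by
          refine mul_le_mul_of_nonneg_left hJball ?_
          have := Real.rpow_nonneg hM0 r
          positivity
      _ = M ^ r * (K * D) := by field_simp
  have hI0 : 0 ≤ ∫ x in ball (0 : EuclideanSpace ℝ (Fin n)) 2, (c * g x) ^ r :=
    integral_nonneg fun x => Real.rpow_nonneg (mul_nonneg hc0 (hg0 x)) r
  calc (∫ x in ball (0 : EuclideanSpace ℝ (Fin n)) 2, (c * g x) ^ r) ^ s
      ≤ (M ^ r * (K * D)) ^ s := Real.rpow_le_rpow hI0 hI hs0.le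
    _ = M ^ (r * s) * (K * D) ^ s := by
        rw [Real.mul_rpow (Real.rpow_nonneg hM0 r) (by positivity), Real.rpow_mul hM0]
    _ = M * (K * D) ^ s := by rw [hrs, Real.rpow_one]
    _ ≤ M * (K * D) := by
        have : (K * D) ^ s ≤ (K * D) ^ (1:ℝ) :=
          Real.rpow_le_rpow_of_exponent_le hKD1 hs1
        rw [Real.rpow_one] at this
        exact mul_le_mul_of_nonneg_left this hM0
    _ = D * K * M := by ring
end
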